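/- Boundary value problem for the linear model: let γ > 0, t₀ < t_f, β ∈ ℝ, K ∈ ℝ. There is a unique solution z of the linear model satisfying z₂(t_f) = β and z₁(t₀) = K; its constants are c₁ = β·e^{t_f} + c₂·e^{−γ t_f} and c₂ = (K − β·e^{t_f − t₀})/(e^{−γ t_f − t₀} + e^{−(1+γ)t₀}), and the point of interest satisfies z₁(t_f) = β + 2·e^{−(1+γ)t_f}·(K − β·e^{t_f − t₀})/(e^{−γ t_f − t₀} + e^{−(1+γ)t₀}). Moreover z₁(t_f) → β as t₀ → −∞ (with γ, t_f, β, K fixed) and z₁(t_f) → β as γ → ∞ (with t₀ < t_f, β, K fixed). -/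

import Mathlib

open Real Filter

lemma ode_exp' (a : ℝ) (f : ℝ → ℝ) (hf : ∀ t, HasDerivAt f (a * f t) t) :
    ∀ t, f t = f 0 * exp (a * t) := by
  have h : ∀ t : ℝ, HasDerivAt (fun t => f t * exp (-(a * t))) 0 t := by
    intro t
    have h2 : HasDerivAt (fun t => exp (-(a * t))) (-a * exp (-(a * t))) t := by
      have : HasDerivAt (fun t : ℝ => -(a * t)) (-a) t := by
        simpa using ((hasDerivAt_id t).const_mul (-a))
      simpa [mul_comm] using this.exp
    have := (hf t).mul h2
    exact this.congr_deriv (by ring)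
  have hc : ∀ t, f t * exp (-(a * t)) = f 0 := by
    intro t
    have := is_const_of_deriv_eq_zero (f := fun t => f t * exp (-(a * t)))
      (fun x => (h x).differentiableAt) (fun x => (h x).deriv) t 0
    simpa using this
  intro t
  have := hc t
  have he : exp (-(a * t)) ≠ 0 := exp_ne_zero _
  field_simp [exp_neg] at this ⊢
  rw [← this, mul_assoc, ← exp_add]; simp

lemma repr_lemma' (γ : ℝ) (z₁ z₂ : ℝ → ℝ)
    (hz : ∀ t : ℝ,
        HasDerivAt z₁ ((-1 - γ / 2) * z₁ t + (γ / 2) * z₂ t) t ∧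
        HasDerivAt z₂ ((γ / 2) * z₁ t + (-1 - γ / 2) * z₂ t) t) :
    ∃ c₁ c₂ : ℝ, ∀ t : ℝ,
        z₁ t = c₁ * exp (-t) + c₂ * exp ((-1 - γ) * t) ∧
        z₂ t = c₁ * exp (-t) - c₂ * exp ((-1 - γ) * t) := by
  have hu : ∀ t, HasDerivAt (fun t => z₁ t + z₂ t) ((-1) * (z₁ t + z₂ t)) t := by
    intro t
    have := (hz t).1.add (hz t).2
    exact this.congr_deriv (by ring)
  have hv : ∀ t, HasDerivAt (fun t => z₁ t - z₂ t) ((-1 - γ) * (z₁ t - z₂ t)) t := by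
    intro t
    have := (hz t).1.sub (hz t).2
    exact this.congr_deriv (by ring)
  have hU := ode_exp' (-1) _ hu
  have hV := ode_exp' (-1 - γ) _ hv
  refine ⟨(z₁ 0 + z₂ 0) / 2, (z₁ 0 - z₂ 0) / 2, fun t => ?_⟩
  have h1 := hU t
  have h2 := hV t
  have e : (-1 : ℝ) * t = -t := by ring
  rw [e] at h1
  constructor <;> linarith

lemma bullet2' (γ : ℝ) (t₀ tf : ℝ) (β K : ℝ)
    (z₁ z₂ : ℝ → ℝ)
    (hrep : ∃ c₁ c₂ : ℝ, ∀ t : ℝ,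
        z₁ t = c₁ * exp (-t) + c₂ * exp ((-1 - γ) * t) ∧
        z₂ t = c₁ * exp (-t) - c₂ * exp ((-1 - γ) * t))
    (hb : z₂ tf = β) (hK : z₁ t₀ = K) :
      ∃ c₁ c₂ : ℝ,
        (∀ t : ℝ,
          z₁ t = c₁ * exp (-t) + c₂ * exp ((-1 - γ) * t) ∧
          z₂ t = c₁ * exp (-t) - c₂ * exp ((-1 - γ) * t)) ∧
        c₂ = (K - β * exp (tf - t₀)) / (exp (-γ * tf - t₀) + exp (-(1 + γ) * t₀)) ∧
        c₁ = β * exp tf + c₂ * exp (-γ * tf) ∧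
        z₁ tf = β + 2 * exp (-(1 + γ) * tf) * (K - β * exp (tf - t₀))
                  / (exp (-γ * tf - t₀) + exp (-(1 + γ) * t₀)) := by
  obtain ⟨c₁, c₂, h⟩ := hrep
  set D := exp (-γ * tf - t₀) + exp (-(1 + γ) * t₀) with hD
  have hDpos : 0 < D := by positivity
  have E1 : c₁ * exp (-tf) - c₂ * exp ((-1 - γ) * tf) = β := by rw [← hb]; exact ((h tf).2).symm
  have E2 : c₁ * exp (-t₀) + c₂ * exp ((-1 - γ) * t₀) = K := by rw [← hK]; exact ((h t₀).1).symm
  have p1 : exp (-tf) * exp (tf - t₀) = exp (-t₀) := by rw [← exp_add]; ring_nf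
  have p2 : exp ((-1 - γ) * tf) * exp (tf - t₀) = exp (-γ * tf - t₀) := by rw [← exp_add]; ring_nf
  have p3 : exp ((-1 - γ) * t₀) = exp (-(1 + γ) * t₀) := by ring_nf
  have key : c₂ * D = K - β * exp (tf - t₀) := by
    rw [hD]
    linear_combination E2 - exp (tf - t₀) * E1 + c₁ * p1 - c₂ * p2 - c₂ * p3
  have hc2 : c₂ = (K - β * exp (tf - t₀)) / D := by
    field_simp
    linarith [key]
  have p4 : exp (-tf) * exp tf = 1 := by rw [← exp_add]; simp
  have p5 : exp ((-1 - γ) * tf) * exp tf = exp (-γ * tf) := by rw [← exp_add]; ring_nf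
  have hc1 : c₁ = β * exp tf + c₂ * exp (-γ * tf) := by
    linear_combination exp tf * E1 - c₁ * p4 + c₂ * p5
  have p6 : exp (-γ * tf) * exp (-tf) = exp ((-1 - γ) * tf) := by rw [← exp_add]; ring_nf
  have p7 : exp ((-1 - γ) * tf) = exp (-(1 + γ) * tf) := by ring_nf
  refine ⟨c₁, c₂, h, hc2, hc1, ?_⟩
  have hz1 : z₁ tf = β + 2 * c₂ * exp (-(1 + γ) * tf) := by
    have := (h tf).1
    rw [this]
    linear_combination exp (-tf) * hc1 + β * p4 + c₂ * p6 + 2 * c₂ * p7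
  rw [hz1, hc2]
  field_simp

/-- Boundary value problem for the linear model: for γ > 0, t₀ < t_f,
β, K ∈ ℝ there is a unique solution of the linear model with z₂(t_f) = β and
z₁(t₀) = K; its constants are c₂ = (K − β·e^{t_f−t₀})/(e^{−γt_f−t₀} + e^{−(1+γ)t₀}),
c₁ = β·e^{t_f} + c₂·e^{−γt_f}, and
z₁(t_f) = β + 2·e^{−(1+γ)t_f}·(K − β·e^{t_f−t₀})/(e^{−γt_f−t₀} + e^{−(1+γ)t₀}).
Moreover z₁(t_f) → β as t₀ → −∞ and as γ → ∞. -/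
theorem stmt8 (γ : ℝ) (hγ : 0 < γ) (t₀ tf : ℝ) (ht : t₀ < tf) (β K : ℝ) :
    (∃! z : (ℝ → ℝ) × (ℝ → ℝ),
      (∀ t : ℝ,
        HasDerivAt z.1 ((-1 - γ / 2) * z.1 t + (γ / 2) * z.2 t) t ∧
        HasDerivAt z.2 ((γ / 2) * z.1 t + (-1 - γ / 2) * z.2 t) t) ∧
      z.2 tf = β ∧ z.1 t₀ = K) ∧
    (∀ z₁ z₂ : ℝ → ℝ,
      (∀ t : ℝ,
        HasDerivAt z₁ ((-1 - γ / 2) * z₁ t + (γ / 2) * z₂ t) t ∧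
        HasDerivAt z₂ ((γ / 2) * z₁ t + (-1 - γ / 2) * z₂ t) t) →
      z₂ tf = β → z₁ t₀ = K →
      ∃ c₁ c₂ : ℝ,
        (∀ t : ℝ,
          z₁ t = c₁ * exp (-t) + c₂ * exp ((-1 - γ) * t) ∧
          z₂ t = c₁ * exp (-t) - c₂ * exp ((-1 - γ) * t)) ∧
        c₂ = (K - β * exp (tf - t₀)) / (exp (-γ * tf - t₀) + exp (-(1 + γ) * t₀)) ∧
        c₁ = β * exp tf + c₂ * exp (-γ * tf) ∧
        z₁ tf = β + 2 * exp (-(1 + γ) * tf) * (K - β * exp (tf - t₀))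
                  / (exp (-γ * tf - t₀) + exp (-(1 + γ) * t₀))) ∧
    Tendsto (fun s : ℝ => β + 2 * exp (-(1 + γ) * tf) * (K - β * exp (tf - s))
        / (exp (-γ * tf - s) + exp (-(1 + γ) * s))) atBot (nhds β) ∧
    Tendsto (fun g : ℝ => β + 2 * exp (-(1 + g) * tf) * (K - β * exp (tf - t₀))
        / (exp (-g * tf - t₀) + exp (-(1 + g) * t₀))) atTop (nhds β) := by
  set D := exp (-γ * tf - t₀) + exp (-(1 + γ) * t₀) with hD
  have hDpos : 0 < D := by positivity
  set c₂ : ℝ := (K - β * exp (tf - t₀)) / D with hc₂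
  set c₁ : ℝ := β * exp tf + c₂ * exp (-γ * tf) with hc₁
  have hkey : c₂ * D = K - β * exp (tf - t₀) := by
    rw [hc₂]; field_simp
  -- the explicit solution
  set Z : (ℝ → ℝ) × (ℝ → ℝ) :=
    (fun t => c₁ * exp (-t) + c₂ * exp ((-1 - γ) * t),
     fun t => c₁ * exp (-t) - c₂ * exp ((-1 - γ) * t)) with hZ
  have hexp1 : ∀ t : ℝ, HasDerivAt (fun t : ℝ => exp (-t)) (-exp (-t)) t := by
    intro t
    have : HasDerivAt (fun t : ℝ => -t) (-1) t := by exact hasDerivAt_neg t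
    simpa [mul_comm] using this.exp
  have hexp2 : ∀ t : ℝ, HasDerivAt (fun t : ℝ => exp ((-1 - γ) * t))
      ((-1 - γ) * exp ((-1 - γ) * t)) t := by
    intro t
    have : HasDerivAt (fun t : ℝ => (-1 - γ) * t) (-1 - γ) t := by
      simpa using (hasDerivAt_id t).const_mul (-1 - γ)
    simpa [mul_comm] using this.exp
  have hZode : ∀ t : ℝ,
      HasDerivAt Z.1 ((-1 - γ / 2) * Z.1 t + (γ / 2) * Z.2 t) t ∧
      HasDerivAt Z.2 ((γ / 2) * Z.1 t + (-1 - γ / 2) * Z.2 t) t := by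
    intro t
    constructor
    · have := ((hexp1 t).const_mul c₁).add ((hexp2 t).const_mul c₂)
      exact this.congr_deriv (by simp only [hZ]; ring)
    · have := ((hexp1 t).const_mul c₁).sub ((hexp2 t).const_mul c₂)
      exact this.congr_deriv (by simp only [hZ]; ring)
  have p4 : exp (-tf) * exp tf = 1 := by rw [← exp_add]; simp
  have p6 : exp (-γ * tf) * exp (-tf) = exp ((-1 - γ) * tf) := by rw [← exp_add]; ring_nf
  have q1 : exp tf * exp (-t₀) = exp (tf - t₀) := by rw [← exp_add]; ring_nf
  have q2 : exp (-γ * tf) * exp (-t₀) = exp (-γ * tf - t₀) := by rw [← exp_add]; ring_nf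
  have p3 : exp ((-1 - γ) * t₀) = exp (-(1 + γ) * t₀) := by ring_nf
  have hZb : Z.2 tf = β := by
    simp only [hZ, hc₁]
    linear_combination β * p4 + c₂ * p6
  have hZK : Z.1 t₀ = K := by
    simp only [hZ, hc₁]
    rw [hD] at hkey
    linear_combination β * q1 + c₂ * q2 + c₂ * p3 + hkey
  refine ⟨⟨Z, ⟨hZode, hZb, hZK⟩, ?_⟩, ?_, ?_, ?_⟩
  · -- uniqueness
    rintro w ⟨hwode, hwb, hwK⟩
    obtain ⟨d₁, d₂, hwrep, hd2, hd1, -⟩ :=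
      bullet2' γ t₀ tf β K w.1 w.2 (repr_lemma' γ w.1 w.2 hwode) hwb hwK
    have hd2' : d₂ = c₂ := by rw [hd2, hc₂, hD]
    have hd1' : d₁ = c₁ := by rw [hd1, hd2', hc₁]
    have e1 : w.1 = Z.1 := by
      funext t
      rw [(hwrep t).1, hd1', hd2']
    have e2 : w.2 = Z.2 := by
      funext t
      rw [(hwrep t).2, hd1', hd2']
    exact Prod.ext e1 e2
  · -- representation statement
    intro z₁ z₂ hz hb hK
    exact bullet2' γ t₀ tf β K z₁ z₂ (repr_lemma' γ z₁ z₂ hz) hb hK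
  · -- limit as t₀ → -∞
    have heq : ∀ s : ℝ, β + 2 * exp (-(1 + γ) * tf) * (K - β * exp (tf - s))
          / (exp (-γ * tf - s) + exp (-(1 + γ) * s))
        = β + (2 * exp (-(1 + γ) * tf) * (K * exp s - β * exp tf))
          / (exp (-γ * tf) + exp (-γ * s)) := by
      intro s
      congr 1
      rw [div_eq_div_iff (by positivity) (by positivity)]
      rw [exp_sub, exp_sub]
      have e1 : exp (-(1 + γ) * s) = exp (-s) * exp (-γ * s) := by
        rw [← exp_add]; ring_nf
      rw [e1, exp_neg]
      field_simp
    rw [funext heq]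
    have hden : Tendsto (fun s : ℝ => exp (-γ * tf) + exp (-γ * s)) atBot atTop := by
      have h1 : Tendsto (fun s : ℝ => -γ * s) atBot atTop := by
        have h := Tendsto.const_mul_atTop hγ
          (tendsto_neg_atBot_atTop : Tendsto (fun x : ℝ => -x) atBot atTop)
        exact h.congr (fun s => by ring)
      have h2 : Tendsto (fun s : ℝ => exp (-γ * s)) atBot atTop :=
        tendsto_exp_atTop.comp h1
      exact tendsto_atTop_add_const_left _ _ h2
    have hnum : Tendsto (fun s : ℝ => 2 * exp (-(1 + γ) * tf) * (K * exp s - β * exp tf))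
        atBot (nhds (2 * exp (-(1 + γ) * tf) * (K * 0 - β * exp tf))) :=
      (((tendsto_exp_atBot.const_mul K).sub tendsto_const_nhds).const_mul _)
    have := (hnum.div_atTop hden).const_add β
    simpa using this
  · -- limit as γ → ∞
    have heq : ∀ g : ℝ, β + 2 * exp (-(1 + g) * tf) * (K - β * exp (tf - t₀))
          / (exp (-g * tf - t₀) + exp (-(1 + g) * t₀))
        = β + (2 * exp (-tf) * (K - β * exp (tf - t₀)))
          / (exp (-t₀) + exp (-t₀ + g * (tf - t₀))) := by
      intro g
      congr 1
      rw [div_eq_div_iff (by positivity) (by positivity)]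
      have r1 : exp (-(1 + g) * tf) = exp (-tf) * exp (-(g * tf)) := by
        rw [← exp_add]; ring_nf
      have r2 : exp (-g * tf - t₀) = exp (-(g * tf)) * exp (-t₀) := by
        rw [← exp_add]; ring_nf
      have r3 : exp (-(1 + g) * t₀) = exp (-t₀) * exp (-(g * t₀)) := by
        rw [← exp_add]; ring_nf
      have r4 : exp (-t₀ + g * (tf - t₀)) = exp (-t₀) * exp (g * tf) * exp (-(g * t₀)) := by
        rw [← exp_add, ← exp_add]; ring_nf
      have r5 : exp (-(g * tf)) * exp (g * tf) = 1 := by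
        rw [← exp_add]; simp
      rw [r1, r2, r3, r4]
      linear_combination 2 * (K - β * exp (tf - t₀)) * exp (-tf) * exp (-t₀) * exp (-(g * t₀)) * r5
    rw [funext heq]
    have hden : Tendsto (fun g : ℝ => exp (-t₀) + exp (-t₀ + g * (tf - t₀))) atTop atTop := by
      have h1 : Tendsto (fun g : ℝ => -t₀ + g * (tf - t₀)) atTop atTop :=
        tendsto_atTop_add_const_left _ _ (tendsto_id.atTop_mul_const (by linarith))
      exact tendsto_atTop_add_const_left _ _ (tendsto_exp_atTop.comp h1)
    have := ((tendsto_const_nhds (x := 2 * exp (-tf) * (K - β * exp (tf - t₀)))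
        (f := atTop (α := ℝ))).div_atTop hden).const_add β
    simpa using this
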